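/- Let $0 < p < 1$, $t, t' \geq 0$ with $t + t' > 0$, $h_l = 2^{-l}h_0$, and suppose for each level $l = 1, \ldots, L$ the $L^2$ error bound $\|\Delta F^l - \widehat{\Delta F^l}\|_2 \leq C s_l^{1/2 - 1/p} h_l^{t+t'} M$ holds with $s_l = 2^{(L-l)(t+t')p/(1-p)}$, together with $\|F - F^L\|_2 \leq C h_L^{t+t'} M$. Then $\|F - F^L_{\mathrm{MLCS}}\|_2 \leq C' M h_L^{t+t'}$ with a constant $C'$ depending only on $C$, $p$, and $t+t'$ (but not on $L$). -/

import Mathlib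

/-- Multilevel `L²` error bound: with sparsities `s_l = 2^{(L-l)(t+t')p/(1-p)}` the sum
of the levelwise `L²` CS errors is geometric, giving `‖F - F^L_MLCS‖ ≤ C' M h_L^{t+t'}`
with `C'` independent of `L`. -/
theorem stmt14 {V : Type*} [NormedAddCommGroup V]
    (p t t' C M : ℝ) (hp0 : 0 < p) (hp1 : p < 1) (ht : 0 ≤ t) (ht' : 0 ≤ t')
    (htt' : 0 < t + t') (hC : 0 ≤ C) (hM : 0 ≤ M) :
    ∃ C' : ℝ, 0 < C' ∧
      ∀ (L : ℕ), 1 ≤ L → ∀ h0 : ℝ, 0 < h0 →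
      ∀ (F : V) (ΔF hatΔF : ℕ → V),
        (∀ l ∈ Finset.Icc 1 L,
          ‖ΔF l - hatΔF l‖ ≤
            C * ((2 : ℝ) ^ (((L : ℝ) - (l : ℝ)) * (t + t') * p / (1 - p))) ^ (1 / 2 - 1 / p) *
              ((2 : ℝ) ^ (-(l : ℝ)) * h0) ^ (t + t') * M) →
        ‖F - ∑ l ∈ Finset.Icc 1 L, ΔF l‖ ≤ C * ((2 : ℝ) ^ (-(L : ℝ)) * h0) ^ (t + t') * M →
        ‖F - ∑ l ∈ Finset.Icc 1 L, hatΔF l‖ ≤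
          C' * M * ((2 : ℝ) ^ (-(L : ℝ)) * h0) ^ (t + t') := by
  have hp' : 0 < 1 - p := by linarith
  set c : ℝ := (t + t') * p / (2 * (1 - p)) with hc
  have hcpos : 0 < c := by positivity
  set r : ℝ := (2 : ℝ) ^ (-c) with hr
  have hr0 : 0 < r := Real.rpow_pos_of_pos two_pos _
  have hr1 : r < 1 := Real.rpow_lt_one_of_one_lt_of_neg one_lt_two (by linarith)
  have h1r : 0 < 1 - r := by linarith
  refine ⟨(C + 1) * (1 + (1 - r)⁻¹), by positivity, ?_⟩
  intro L hL h0 hh0 F ΔF hatΔF hbound hF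
  have hApos : (0:ℝ) < ((2 : ℝ) ^ (-(L : ℝ)) * h0) ^ (t + t') := by
    have : (0:ℝ) < (2 : ℝ) ^ (-(L : ℝ)) * h0 :=
      mul_pos (Real.rpow_pos_of_pos two_pos _) hh0
    positivity
  set A : ℝ := ((2 : ℝ) ^ (-(L : ℝ)) * h0) ^ (t + t') with hA
  -- key pointwise identity
  have key : ∀ l ∈ Finset.Icc 1 L,
      C * ((2 : ℝ) ^ (((L : ℝ) - (l : ℝ)) * (t + t') * p / (1 - p))) ^ (1 / 2 - 1 / p) *
        ((2 : ℝ) ^ (-(l : ℝ)) * h0) ^ (t + t') * M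
      = C * M * A * r ^ (L - l) := by
    intro l hl
    obtain ⟨hl1, hl2⟩ := Finset.mem_Icc.mp hl
    have hcast : ((L - l : ℕ) : ℝ) = (L : ℝ) - (l : ℝ) := by
      push_cast [hl2]; ring
    have h2 : (0:ℝ) ≤ 2 := by norm_num
    have e1 : ((2 : ℝ) ^ (((L : ℝ) - (l : ℝ)) * (t + t') * p / (1 - p))) ^ (1 / 2 - 1 / p)
        = (2:ℝ) ^ ((((L : ℝ) - (l : ℝ)) * (t + t') * p / (1 - p)) * (1 / 2 - 1 / p)) :=
      (Real.rpow_mul h2 _ _).symm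
    have e2 : ((2 : ℝ) ^ (-(l : ℝ)) * h0) ^ (t + t')
        = (2:ℝ) ^ (-(l : ℝ) * (t + t')) * h0 ^ (t + t') := by
      rw [Real.mul_rpow (by positivity) hh0.le, ← Real.rpow_mul h2]
    have e3 : A = (2:ℝ) ^ (-(L : ℝ) * (t + t')) * h0 ^ (t + t') := by
      rw [hA, Real.mul_rpow (by positivity) hh0.le, ← Real.rpow_mul h2]
    have e4 : r ^ (L - l) = (2:ℝ) ^ (-c * ((L : ℝ) - (l : ℝ))) := by
      rw [← Real.rpow_natCast r (L - l), hcast, hr, ← Real.rpow_mul h2]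
    rw [e1, e2, e3, e4]
    rw [show C * ((2:ℝ) ^ ((((L:ℝ) - l) * (t + t') * p / (1 - p)) * (1 / 2 - 1 / p))) *
          ((2:ℝ) ^ (-(l:ℝ) * (t + t')) * h0 ^ (t + t')) * M
        = C * M * h0 ^ (t + t') *
          ((2:ℝ) ^ ((((L:ℝ) - l) * (t + t') * p / (1 - p)) * (1 / 2 - 1 / p)) *
           (2:ℝ) ^ (-(l:ℝ) * (t + t'))) by ring,
      show C * M * ((2:ℝ) ^ (-(L:ℝ) * (t + t')) * h0 ^ (t + t')) * (2:ℝ) ^ (-c * ((L:ℝ) - l))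
        = C * M * h0 ^ (t + t') *
          ((2:ℝ) ^ (-(L:ℝ) * (t + t')) * (2:ℝ) ^ (-c * ((L:ℝ) - l))) by ring,
      ← Real.rpow_add two_pos, ← Real.rpow_add two_pos]
    have hexp : ∀ x y : ℝ, x = y → (2:ℝ) ^ x = (2:ℝ) ^ y := fun x y h => by rw [h]
    refine congrArg (fun z => C * M * h0 ^ (t + t') * z) (hexp _ _ ?_)
    rw [hc]
    field_simp
    ring
  -- triangle inequality
  have hsplit : F - ∑ l ∈ Finset.Icc 1 L, hatΔF l
      = (F - ∑ l ∈ Finset.Icc 1 L, ΔF l) + ∑ l ∈ Finset.Icc 1 L, (ΔF l - hatΔF l) := by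
    rw [Finset.sum_sub_distrib]; abel
  have step1 : ‖F - ∑ l ∈ Finset.Icc 1 L, hatΔF l‖
      ≤ ‖F - ∑ l ∈ Finset.Icc 1 L, ΔF l‖ + ∑ l ∈ Finset.Icc 1 L, ‖ΔF l - hatΔF l‖ := by
    rw [hsplit]
    exact le_trans (norm_add_le _ _) (by
      gcongr
      exact norm_sum_le _ _)
  -- geometric sum bound
  have hgeom : ∑ l ∈ Finset.Icc 1 L, r ^ (L - l) ≤ (1 - r)⁻¹ := by
    have hreind : ∑ l ∈ Finset.Icc 1 L, r ^ (L - l) = ∑ k ∈ Finset.range L, r ^ k := by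
      refine Finset.sum_nbij' (fun l => L - l) (fun k => L - k) ?_ ?_ ?_ ?_ ?_
      · intro l hl
        obtain ⟨h1, h2⟩ := Finset.mem_Icc.mp hl
        exact Finset.mem_range.mpr (by omega)
      · intro k hk
        have := Finset.mem_range.mp hk
        exact Finset.mem_Icc.mpr ⟨by omega, by omega⟩
      · intro l hl
        obtain ⟨h1, h2⟩ := Finset.mem_Icc.mp hl
        omega
      · intro k hk
        have := Finset.mem_range.mp hk
        omega
      · intro l hl; rfl
    rw [hreind]
    calc ∑ k ∈ Finset.range L, r ^ k
        ≤ ∑' k : ℕ, r ^ k := Summable.sum_le_tsum _ (fun k _ => by positivity)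
          (summable_geometric_of_lt_one hr0.le hr1)
      _ = (1 - r)⁻¹ := tsum_geometric_of_lt_one hr0.le hr1
  have step2 : ∑ l ∈ Finset.Icc 1 L, ‖ΔF l - hatΔF l‖ ≤ C * M * A * (1 - r)⁻¹ := by
    calc ∑ l ∈ Finset.Icc 1 L, ‖ΔF l - hatΔF l‖
        ≤ ∑ l ∈ Finset.Icc 1 L, C * M * A * r ^ (L - l) := by
          refine Finset.sum_le_sum fun l hl => ?_
          rw [← key l hl]; exact hbound l hl
      _ = C * M * A * ∑ l ∈ Finset.Icc 1 L, r ^ (L - l) := by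
          rw [Finset.mul_sum]
      _ ≤ C * M * A * (1 - r)⁻¹ := by
          have : (0:ℝ) ≤ C * M * A := by positivity
          exact mul_le_mul_of_nonneg_left hgeom this
  have : ‖F - ∑ l ∈ Finset.Icc 1 L, hatΔF l‖ ≤ C * A * M + C * M * A * (1 - r)⁻¹ :=
    le_trans step1 (add_le_add hF step2)
  refine le_trans this ?_
  have hinv : (0:ℝ) < (1 - r)⁻¹ := by positivity
  nlinarith [mul_nonneg hM hApos.le, mul_nonneg (mul_nonneg hM hApos.le) hinv.le]
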